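/- Volume lower bound for the logistic level set: Assume ‖x_i‖₂ ≤ R for all i, let ℋ = {θ ∈ ℝ^d : ‖θ‖₂ ≤ r} with r, R > 0 and d ≥ 1, and assume A = Σ_{i=1}^n x_i x_iᵀ is positive definite. Let B = {θ ∈ ℝ^d : θᵀAθ ≤ R_B²} with R_B = √n·rR + √(rR), and let μ_B be the uniform probability measure on B. Then μ_B(ℋ_{rR}) ≥ (max(8, 2nrR))^{−d}; equivalently, log(1/μ_B(ℋ_{rR})) ≤ d·log(max(8, 2nrR)). -/

import Mathlib

open scoped RealInnerProductSpace

open MeasureTheory Pointwise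

lemma mix_pos (p t : ℝ) (hp0 : 0 ≤ p) (hp1 : p ≤ 1) : 0 < 1 - p + p * Real.exp t := by
  rcases eq_or_lt_of_le hp0 with h | h
  · simp [← h]
  · nlinarith [Real.exp_pos t]

lemma log_mix_le_aux (p t : ℝ) (hp0 : 0 ≤ p) (hp1 : p ≤ 1) :
    Real.log (1 - p + p * Real.exp t) ≤ p * t + t ^ 2 := by
  have hexp : 0 < Real.exp t := Real.exp_pos t
  have hpos : 0 < 1 - p + p * Real.exp t := mix_pos p t hp0 hp1
  rcases le_total t (-1) with hT | hT
  · have h1 : Real.exp t ≤ 1 := by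
      rw [show (1:ℝ) = Real.exp 0 by rw [Real.exp_zero]]
      exact Real.exp_le_exp.mpr (by linarith)
    have h2 : Real.log (1 - p + p * Real.exp t) ≤ 0 :=
      Real.log_nonpos (le_of_lt hpos) (by nlinarith)
    nlinarith [mul_nonneg (mul_nonneg hp0 (neg_nonneg.mpr (by linarith : t ≤ 0))) (by linarith : 0 ≤ -t)]
  rcases le_total t 1 with hT1 | hT1
  · have h1 : Real.log (1 - p + p * Real.exp t) ≤ p * (Real.exp t - 1) := by
      have := Real.log_le_sub_one_of_pos hpos
      linarith
    have h2 : Real.exp t - 1 - t ≤ t ^ 2 := by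
      have h := Real.exp_bound (x := t) (by rw [abs_le]; constructor <;> linarith)
        (by norm_num : 0 < 2)
      simp [Finset.sum_range_succ] at h
      rw [abs_le] at h
      nlinarith [sq_abs t, abs_nonneg t]
    have h3 : 0 ≤ Real.exp t - 1 - t := by nlinarith [Real.add_one_le_exp t]
    nlinarith
  · have he1 : (1:ℝ) ≤ Real.exp t := by nlinarith [Real.add_one_le_exp t]
    have h1 : 1 - p + p * Real.exp t ≤ Real.exp t := by nlinarith
    have h2 : Real.log (1 - p + p * Real.exp t) ≤ t := by
      calc Real.log (1 - p + p * Real.exp t) ≤ Real.log (Real.exp t) :=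
            Real.log_le_log hpos h1
        _ = t := Real.log_exp t
    nlinarith

lemma logistic_taylor (z δ : ℝ) :
    Real.log (1 + Real.exp (-(z + δ))) ≤
      Real.log (1 + Real.exp (-z)) - 1 / (1 + Real.exp z) * δ + δ ^ 2 := by
  set p : ℝ := 1 / (1 + Real.exp z) with hp
  have hez : 0 < Real.exp z := Real.exp_pos z
  have h1z : 0 < 1 + Real.exp z := by linarith
  have hp0 : 0 ≤ p := by positivity
  have hp1 : p ≤ 1 := by rw [hp, div_le_one h1z]; linarith
  have hmix : 0 < 1 - p + p * Real.exp (-δ) := mix_pos p (-δ) hp0 hp1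
  have key : 1 + Real.exp (-(z + δ)) = (1 + Real.exp (-z)) * (1 - p + p * Real.exp (-δ)) := by
    rw [hp]
    have h2 : Real.exp (-(z + δ)) = (Real.exp z * Real.exp δ)⁻¹ := by
      rw [Real.exp_neg, Real.exp_add]
    rw [Real.exp_neg z, h2, Real.exp_neg δ]
    have heδ : Real.exp δ ≠ 0 := (Real.exp_pos δ).ne'
    field_simp
    ring
  rw [key, Real.log_mul (by positivity) hmix.ne']
  have h := log_mix_le_aux p (-δ) hp0 hp1
  rw [neg_sq] at h
  linarith

set_option maxHeartbeats 1000000 in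
/-- **Volume lower bound for the logistic level set.**
Logistic setting with `‖x_i‖ ≤ R`, parameter ball `ℋ = {‖θ‖ ≤ r}`, positive definite
`A` (encoded via the quadratic form `u ↦ ∑ i ⟪x_i, u⟫²`), `B` the ball
`{θ : θᵀAθ ≤ R_B²}` with `R_B = √n·rR + √(rR)`, and `μ_B` the uniform probability
measure on `B` (so `μ_B(E) = vol(E ∩ B)/vol(B)`).  Then
`μ_B(ℋ_{rR}) ≥ (max(8, 2nrR))^{−d}`, stated as
`(max(8, 2nrR))^{−d} · vol(B) ≤ vol(ℋ_{rR} ∩ B)`. -/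
theorem logistic_levelset_volume_lower_bound
    {d n : ℕ} (hd : 1 ≤ d) (r R : ℝ) (hr : 0 < r) (hR : 0 < R)
    (x : Fin n → EuclideanSpace ℝ (Fin d)) (hx : ∀ i, ‖x i‖ ≤ R)
    (y : Fin n → ℝ) (hy : ∀ i, y i = 1 ∨ y i = -1)
    -- A = ∑ x_i x_iᵀ is positive definite
    (hA : ∀ u : EuclideanSpace ℝ (Fin d), u ≠ 0 → 0 < ∑ i, ⟪x i, u⟫ ^ 2)
    (L : EuclideanSpace ℝ (Fin d) → ℝ)
    (hL : ∀ θ, L θ = ∑ i, -Real.log (1 / (1 + Real.exp (-(y i * ⟪x i, θ⟫)))))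
    (θs : EuclideanSpace ℝ (Fin d)) (hθs : ‖θs‖ ≤ r)
    (hθsmin : ∀ θ : EuclideanSpace ℝ (Fin d), ‖θ‖ ≤ r → L θs ≤ L θ)
    -- ℋ_A = {ϑ : inf_{θ ∈ ℋ} ‖ϑ − θ‖_A² ≤ rR}
    (HA : Set (EuclideanSpace ℝ (Fin d)))
    (hHA : HA = {ϑ | ∃ θ : EuclideanSpace ℝ (Fin d),
      ‖θ‖ ≤ r ∧ ∑ i, ⟪x i, ϑ - θ⟫ ^ 2 ≤ r * R})
    -- the level set ℋ_{rR}
    (Hlev : Set (EuclideanSpace ℝ (Fin d)))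
    (hHlev : Hlev = {θ ∈ HA | L θ ≤ L θs + r * R})
    -- the ball B
    (B : Set (EuclideanSpace ℝ (Fin d)))
    (hB : B = {θ | ∑ i, ⟪x i, θ⟫ ^ 2 ≤ (Real.sqrt n * r * R + Real.sqrt (r * R)) ^ 2}) :
    ENNReal.ofReal ((max 8 (2 * n * r * R))⁻¹ ^ d) * MeasureTheory.volume B
      ≤ MeasureTheory.volume (Hlev ∩ B) := by
  classical
  have ha : 0 < r * R := mul_pos hr hR
  set a := r * R with ha_def
  set sa := Real.sqrt a with hsa_def
  have hsa : 0 < sa := Real.sqrt_pos.mpr ha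
  have hsa2 : sa ^ 2 = a := Real.sq_sqrt ha.le
  set RB : ℝ := Real.sqrt n * r * R + sa with hRB_def
  have hsn : 0 ≤ Real.sqrt (n : ℝ) := Real.sqrt_nonneg _
  have hRB : 0 < RB := by
    have h1 : 0 ≤ Real.sqrt (n : ℝ) * r * R := by positivity
    rw [hRB_def]; linarith
  set t := sa / RB with ht_def
  have ht : 0 < t := div_pos hsa hRB
  set M := max (8:ℝ) (2 * n * r * R) with hM_def
  have hM8 : (8:ℝ) ≤ M := le_max_left _ _
  have hM0 : 0 < M := by linarith
  -- s = √(n·a)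
  set s := Real.sqrt (n : ℝ) * sa with hs_def
  have hs0 : 0 ≤ s := by positivity
  have hs2 : s ^ 2 = n * a := by
    rw [hs_def, mul_pow, hsa2, Real.sq_sqrt (Nat.cast_nonneg n)]
  have hsrR : Real.sqrt (n : ℝ) * r * R = s * sa := by
    rw [hs_def]
    have : Real.sqrt (n:ℝ) * sa * sa = Real.sqrt (n:ℝ) * sa ^ 2 := by ring
    rw [this, hsa2, ha_def]; ring
  have hRBs : RB = s * sa + sa := by rw [hRB_def, hsrR]
  -- constant inequality
  have h2s : 2 * s + 2 ≤ M := by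
    rcases le_total ((n : ℝ) * a) 4 with h | h
    · have hsle : s ≤ 2 := by nlinarith
      linarith
    · have hM2 : 2 * ((n:ℝ) * a) ≤ M := by
        have he : (2 * (n:ℝ) * r * R) = 2 * ((n:ℝ) * a) := by rw [ha_def]; ring
        calc 2 * ((n:ℝ) * a) = 2 * (n:ℝ) * r * R := he.symm
          _ ≤ M := le_max_right _ _
      have hs2' : 2 ≤ s := by nlinarith
      nlinarith
  have hconst : 2 * RB ≤ sa * M := by
    rw [hRBs]
    nlinarith [mul_le_mul_of_nonneg_left h2s hsa.le]
  -- the sets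
  set C : Set (EuclideanSpace ℝ (Fin d)) := {v | ∑ i, ⟪x i, v⟫ ^ 2 ≤ a} with hC_def
  set Hs : Set (EuclideanSpace ℝ (Fin d)) :=
    {v | 0 ≤ ∑ i, 1 / (1 + Real.exp (y i * ⟪x i, θs⟫)) * (y i * ⟪x i, v⟫)} with hHs_def
  -- C = t • B
  have hta : t ^ 2 * RB ^ 2 = a := by
    rw [ht_def, div_pow]
    field_simp
    exact hsa2
  have hCB : C = t • B := by
    ext v
    rw [Set.mem_smul_set_iff_inv_smul_mem₀ ht.ne', hB]
    simp only [Set.mem_setOf_eq, hC_def]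
    have hexp : ∀ i : Fin n, ⟪x i, t⁻¹ • v⟫ = t⁻¹ * ⟪x i, v⟫ := fun i =>
      real_inner_smul_right _ _ _
    have hsum : ∑ i, ⟪x i, t⁻¹ • v⟫ ^ 2 = (t ^ 2)⁻¹ * ∑ i, ⟪x i, v⟫ ^ 2 := by
      rw [Finset.mul_sum]
      exact Finset.sum_congr rfl fun i _ => by rw [hexp i, mul_pow, inv_pow]
    rw [hRB_def] at hta
    rw [hsum, inv_mul_le_iff₀ (by positivity), hta]
  -- halving
  have hneg : -(C ∩ Hsᶜ) ⊆ C ∩ Hs := by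
    rintro w hw
    rw [Set.mem_neg] at hw
    obtain ⟨h1, h2⟩ := hw
    simp only [hC_def, hHs_def, Set.mem_setOf_eq, Set.mem_compl_iff, Set.mem_inter_iff,
      not_le] at h1 h2 ⊢
    have hQ : ∀ i : Fin n, ⟪x i, -w⟫ ^ 2 = ⟪x i, w⟫ ^ 2 := fun i => by
      rw [inner_neg_right]; ring
    have hΦ : (∑ i, 1 / (1 + Real.exp (y i * ⟪x i, θs⟫)) * (y i * ⟪x i, -w⟫))
        = -∑ i, 1 / (1 + Real.exp (y i * ⟪x i, θs⟫)) * (y i * ⟪x i, w⟫) := by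
      rw [← Finset.sum_neg_distrib]
      exact Finset.sum_congr rfl fun i _ => by rw [inner_neg_right]; ring
    constructor
    · calc ∑ i, ⟪x i, w⟫ ^ 2 = ∑ i, ⟪x i, -w⟫ ^ 2 :=
            (Finset.sum_congr rfl fun i _ => (hQ i)).symm
        _ ≤ a := h1
    · rw [hΦ] at h2
      linarith
  have hhalf : volume C ≤ 2 * volume (C ∩ Hs) := by
    calc volume C = volume ((C ∩ Hs) ∪ (C ∩ Hsᶜ)) := by rw [Set.inter_union_compl]
      _ ≤ volume (C ∩ Hs) + volume (C ∩ Hsᶜ) := measure_union_le _ _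
      _ = volume (C ∩ Hs) + volume (-(C ∩ Hsᶜ)) := by rw [Measure.measure_neg]
      _ ≤ volume (C ∩ Hs) + volume (C ∩ Hs) := add_le_add le_rfl (measure_mono hneg)
      _ = 2 * volume (C ∩ Hs) := (two_mul _).symm
  -- L rewriting
  have hL' : ∀ θ, L θ = ∑ i, Real.log (1 + Real.exp (-(y i * ⟪x i, θ⟫))) := by
    intro θ
    rw [hL]
    exact Finset.sum_congr rfl fun i _ => by rw [one_div, Real.log_inv, neg_neg]
  -- inclusion
  have hsub : (θs +ᵥ (C ∩ Hs)) ⊆ Hlev ∩ B := by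
    rintro θ ⟨v, ⟨hvC, hvH⟩, rfl⟩
    simp only [hC_def, Set.mem_setOf_eq] at hvC
    simp only [hHs_def, Set.mem_setOf_eq] at hvH
    show θs + v ∈ Hlev ∩ B
    -- B membership
    have hP : ∑ i, ⟪x i, θs⟫ ^ 2 ≤ (s * sa) ^ 2 := by
      have hterm : ∀ i : Fin n, ⟪x i, θs⟫ ^ 2 ≤ a ^ 2 := by
        intro i
        have h1 : |⟪x i, θs⟫| ≤ ‖x i‖ * ‖θs‖ := abs_real_inner_le_norm _ _
        have h2 : ‖x i‖ * ‖θs‖ ≤ R * r := by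
          apply mul_le_mul (hx i) hθs (norm_nonneg _) hR.le
        have h3 : ⟪x i, θs⟫ ^ 2 ≤ (R * r) ^ 2 := by
          rw [← sq_abs]
          apply pow_le_pow_left₀ (abs_nonneg _) (h1.trans h2)
        calc ⟪x i, θs⟫ ^ 2 ≤ (R * r) ^ 2 := h3
          _ = a ^ 2 := by rw [ha_def]; ring
      calc ∑ i, ⟪x i, θs⟫ ^ 2 ≤ ∑ _i : Fin n, a ^ 2 := Finset.sum_le_sum fun i _ => hterm i
        _ = n * a ^ 2 := by rw [Finset.sum_const, Finset.card_univ, Fintype.card_fin]; ring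
        _ = (s * sa) ^ 2 := by linear_combination (-sa ^ 2) * hs2 - ((n : ℝ) * a) * hsa2
    have hS : (∑ i, ⟪x i, θs⟫ * ⟪x i, v⟫) ≤ s * sa * sa := by
      have hCS : (∑ i, ⟪x i, θs⟫ * ⟪x i, v⟫) ^ 2
          ≤ (∑ i, ⟪x i, θs⟫ ^ 2) * (∑ i, ⟪x i, v⟫ ^ 2) :=
        Finset.sum_mul_sq_le_sq_mul_sq _ _ _
      have hV' : ∑ i, ⟪x i, v⟫ ^ 2 ≤ sa ^ 2 := by rw [hsa2]; exact hvC
      have hVnn : 0 ≤ ∑ i, ⟪x i, v⟫ ^ 2 := Finset.sum_nonneg fun i _ => sq_nonneg _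
      have hPnn : 0 ≤ ∑ i, ⟪x i, θs⟫ ^ 2 := Finset.sum_nonneg fun i _ => sq_nonneg _
      have hK : 0 ≤ s * sa * sa := by positivity
      have hSq : (∑ i, ⟪x i, θs⟫ * ⟪x i, v⟫) ^ 2 ≤ (s * sa * sa) ^ 2 := by
        calc (∑ i, ⟪x i, θs⟫ * ⟪x i, v⟫) ^ 2
            ≤ (∑ i, ⟪x i, θs⟫ ^ 2) * (∑ i, ⟪x i, v⟫ ^ 2) := hCS
          _ ≤ (s * sa) ^ 2 * (∑ i, ⟪x i, v⟫ ^ 2) := mul_le_mul_of_nonneg_right hP hVnn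
          _ ≤ (s * sa) ^ 2 * sa ^ 2 := mul_le_mul_of_nonneg_left hV' (sq_nonneg _)
          _ = (s * sa * sa) ^ 2 := by ring
      exact le_of_pow_le_pow_left₀ (by norm_num : (2:ℕ) ≠ 0) hK hSq
    have hBmem : ∑ i, ⟪x i, θs + v⟫ ^ 2 ≤ RB ^ 2 := by
      have hexpand : ∑ i, ⟪x i, θs + v⟫ ^ 2 =
          (∑ i, ⟪x i, θs⟫ ^ 2) + 2 * (∑ i, ⟪x i, θs⟫ * ⟪x i, v⟫) + ∑ i, ⟪x i, v⟫ ^ 2 := by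
        rw [Finset.mul_sum, ← Finset.sum_add_distrib, ← Finset.sum_add_distrib]
        exact Finset.sum_congr rfl fun i _ => by rw [inner_add_right]; ring
      rw [hexpand, hRBs]
      have hexp2 : (s * sa + sa) ^ 2 = (s * sa) ^ 2 + 2 * (s * sa * sa) + sa ^ 2 := by ring
      rw [hexp2]
      linarith [hP, hS, hvC, hsa2]
    constructor
    · -- Hlev
      rw [hHlev]
      refine ⟨?_, ?_⟩
      · rw [hHA]
        refine ⟨θs, hθs, ?_⟩
        have : θs + v - θs = v := by abel
        rw [this]
        exact hvC
      · -- L bound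
        have hterm : ∀ i : Fin n, Real.log (1 + Real.exp (-(y i * ⟪x i, θs + v⟫))) ≤
            Real.log (1 + Real.exp (-(y i * ⟪x i, θs⟫)))
              - 1 / (1 + Real.exp (y i * ⟪x i, θs⟫)) * (y i * ⟪x i, v⟫) + ⟪x i, v⟫ ^ 2 := by
          intro i
          have hz : y i * ⟪x i, θs + v⟫ = y i * ⟪x i, θs⟫ + y i * ⟪x i, v⟫ := by
            rw [inner_add_right]; ring
          have hy2 : (y i * ⟪x i, v⟫) ^ 2 = ⟪x i, v⟫ ^ 2 := by
            rcases hy i with h | h <;> rw [h] <;> ring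
          have h := logistic_taylor (y i * ⟪x i, θs⟫) (y i * ⟪x i, v⟫)
          rw [hy2] at h
          rw [hz]
          exact h
        have hsum := Finset.sum_le_sum fun i (_ : i ∈ Finset.univ) => hterm i
        rw [Finset.sum_add_distrib, Finset.sum_sub_distrib] at hsum
        rw [hL' (θs + v), hL' θs]
        have := hvC
        linarith
    · rw [hB]
      exact hBmem
  -- assembly
  have htM : 2 ≤ t * M := by
    rw [ht_def, div_mul_eq_mul_div, le_div_iff₀ hRB]
    linarith
  have hpow : 2 * M⁻¹ ^ d ≤ t ^ d := by
    have h1 : (2:ℝ) ≤ (t * M) ^ d := by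
      calc (2:ℝ) ≤ 2 ^ d := le_self_pow₀ one_le_two (by omega)
        _ ≤ (t * M) ^ d := pow_le_pow_left₀ (by norm_num) htM d
    have h2 : (t * M) ^ d * M⁻¹ ^ d = t ^ d := by
      rw [← mul_pow, mul_assoc, mul_inv_cancel₀ hM0.ne', mul_one]
    calc 2 * M⁻¹ ^ d ≤ (t * M) ^ d * M⁻¹ ^ d :=
          mul_le_mul_of_nonneg_right h1 (by positivity)
      _ = t ^ d := h2
  calc ENNReal.ofReal (M⁻¹ ^ d) * volume B
      ≤ ENNReal.ofReal (2⁻¹ * t ^ d) * volume B := by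
        refine mul_le_mul' ?_ le_rfl
        exact ENNReal.ofReal_le_ofReal (by linarith)
    _ = 2⁻¹ * ENNReal.ofReal (t ^ d) * volume B := by
        rw [ENNReal.ofReal_mul (by norm_num : (0:ℝ) ≤ 2⁻¹),
          ENNReal.ofReal_inv_of_pos (by norm_num : (0:ℝ) < 2), ENNReal.ofReal_ofNat]
    _ = 2⁻¹ * volume (t • B) := by
        rw [Measure.addHaar_smul volume, finrank_euclideanSpace_fin,
          abs_of_nonneg (by positivity : (0:ℝ) ≤ t ^ d), mul_assoc]
    _ = 2⁻¹ * volume C := by rw [hCB]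
    _ ≤ volume (C ∩ Hs) := by
        calc 2⁻¹ * volume C ≤ 2⁻¹ * (2 * volume (C ∩ Hs)) := mul_le_mul' le_rfl hhalf
          _ = volume (C ∩ Hs) := by
            rw [← mul_assoc, ENNReal.inv_mul_cancel (by norm_num) (by norm_num), one_mul]
    _ = volume (θs +ᵥ (C ∩ Hs)) := (measure_vadd volume θs _).symm
    _ ≤ volume (Hlev ∩ B) := measure_mono hsub
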